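/- Let $f : \mathbb{R}^2 \to \mathbb{R}$ be a separately convex function, and define $g : \mathbb{R} \to \mathbb{R}$ by $g(t) = f(t,t)$. Then for every $x \in \mathbb{R}$, $\liminf_{t \to 0^+} \frac{g(x+t) + g(x-t) - 2 g(x)}{t} \geq 0$. -/

import Mathlib

open Filter

theorem statement3 (f : ℝ × ℝ → ℝ)
    (hsep₁ : ∀ y : ℝ, ConvexOn ℝ Set.univ fun x : ℝ => f (x, y))
    (hsep₂ : ∀ x : ℝ, ConvexOn ℝ Set.univ fun y : ℝ => f (x, y))
    (g : ℝ → ℝ) (hg : ∀ t : ℝ, g t = f (t, t)) (x : ℝ) :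
    0 ≤ liminf (fun t : ℝ =>
        (((g (x + t) + g (x - t) - 2 * g x) / t : ℝ) : EReal))
      (nhdsWithin 0 (Set.Ioi 0)) := by
  -- slope monotonicity helper
  have slope_mono : ∀ (φ : ℝ → ℝ), ConvexOn ℝ Set.univ φ → ∀ {a b c : ℝ}, a < b → b < c →
      (φ b - φ a) / (b - a) ≤ (φ c - φ b) / (c - b) := by
    intro φ hφ a b c hab hbc
    exact hφ.slope_mono_adjacent trivial trivial hab hbc
  -- continuity helpers
  have cont₁ : ∀ y : ℝ, Continuous fun u : ℝ => f (u, y) := by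
    intro y
    have := (hsep₁ y).continuousOn isOpen_univ
    rwa [continuousOn_univ] at this
  have cont₂ : ∀ u : ℝ, Continuous fun y : ℝ => f (u, y) := by
    intro u
    have := (hsep₂ u).continuousOn isOpen_univ
    rwa [continuousOn_univ] at this
  set S₁ : Set ℝ := {s | ∃ h : ℝ, 0 < h ∧ s = (f (x, x) - f (x - h, x)) / h} with hS₁
  set S₂ : Set ℝ := {s | ∃ h : ℝ, 0 < h ∧ s = (f (x, x + h) - f (x, x)) / h} with hS₂
  have mem₁ : ∀ h : ℝ, 0 < h → (f (x, x) - f (x - h, x)) / h ∈ S₁ := fun h hh => ⟨h, hh, rfl⟩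
  have mem₂ : ∀ h : ℝ, 0 < h → (f (x, x + h) - f (x, x)) / h ∈ S₂ := fun h hh => ⟨h, hh, rfl⟩
  have ne₁ : S₁.Nonempty := ⟨_, mem₁ 1 one_pos⟩
  have ne₂ : S₂.Nonempty := ⟨_, mem₂ 1 one_pos⟩
  have bdd₁ : BddAbove S₁ := by
    refine ⟨(f (x + 1, x) - f (x, x)) / 1, ?_⟩
    rintro s ⟨h, hh, rfl⟩
    have := slope_mono (fun u => f (u, x)) (hsep₁ x)
      (show x - h < x by linarith) (show x < x + 1 by linarith)
    simpa [sub_sub_cancel, add_sub_cancel_left] using this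
  have bdd₂ : BddBelow S₂ := by
    refine ⟨(f (x, x) - f (x, x - 1)) / 1, ?_⟩
    rintro s ⟨h, hh, rfl⟩
    have := slope_mono (fun y => f (x, y)) (hsep₂ x)
      (show x - 1 < x by linarith) (show x < x + h by linarith)
    simpa [sub_sub_cancel, add_sub_cancel_left] using this
  set A := sSup S₁ with hA
  set B := sInf S₂ with hB
  -- key eventual bound
  have key : ∀ ε : ℝ, 0 < ε →
      ∀ᶠ t in nhdsWithin (0:ℝ) (Set.Ioi 0),
        -(2*ε) ≤ (g (x + t) + g (x - t) - 2 * g x) / t := by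
    intro ε hε
    obtain ⟨s₁, hs₁mem, hs₁⟩ := exists_lt_of_lt_csSup ne₁ (show A - ε < A by linarith)
    obtain ⟨h₁, hh₁, rfl⟩ := hs₁mem
    obtain ⟨s₂, hs₂mem, hs₂⟩ := exists_lt_of_csInf_lt ne₂ (show B < B + ε by linarith)
    obtain ⟨h₂, hh₂, rfl⟩ := hs₂mem
    -- eventual bound 1 : (f (x, x+t) - f (x-h₁, x+t))/h₁ > A - ε
    have ev1 : ∀ᶠ t in nhdsWithin (0:ℝ) (Set.Ioi 0),
        A - ε < (f (x, x + t) - f (x - h₁, x + t)) / h₁ := by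
      have hcont : ContinuousAt (fun t : ℝ => (f (x, x + t) - f (x - h₁, x + t)) / h₁) 0 := by
        apply ContinuousAt.div_const
        exact (((cont₂ x).comp (continuous_const.add continuous_id)).sub
          (((cont₂ (x - h₁)).comp (continuous_const.add continuous_id)))).continuousAt
      have h0 : A - ε < (f (x, x + 0) - f (x - h₁, x + 0)) / h₁ := by simpa using hs₁
      exact (hcont.tendsto.eventually_const_lt h0).filter_mono nhdsWithin_le_nhds
    -- eventual bound 2 : (f (x-t, x+h₂) - f (x-t, x))/h₂ < B + ε
    have ev2 : ∀ᶠ t in nhdsWithin (0:ℝ) (Set.Ioi 0),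
        (f (x - t, x + h₂) - f (x - t, x)) / h₂ < B + ε := by
      have hcont : ContinuousAt (fun t : ℝ => (f (x - t, x + h₂) - f (x - t, x)) / h₂) 0 := by
        apply ContinuousAt.div_const
        exact (((cont₁ (x + h₂)).comp (continuous_const.sub continuous_id)).sub
          (((cont₁ x).comp (continuous_const.sub continuous_id)))).continuousAt
      have h0 : (f (x - 0, x + h₂) - f (x - 0, x)) / h₂ < B + ε := by simpa using hs₂
      exact (hcont.tendsto.eventually_lt_const h0).filter_mono nhdsWithin_le_nhds
    filter_upwards [ev1, ev2, self_mem_nhdsWithin] with t h1 h2 ht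
    have ht : (0:ℝ) < t := ht
    -- the four slopes
    have e1 : (f (x, x + t) - f (x - h₁, x + t)) / h₁
        ≤ (f (x + t, x + t) - f (x, x + t)) / t := by
      have := slope_mono (fun u => f (u, x + t)) (hsep₁ (x + t))
        (show x - h₁ < x by linarith) (show x < x + t by linarith)
      simpa [sub_sub_cancel, add_sub_cancel_left] using this
    have e2 : B ≤ (f (x, x + t) - f (x, x)) / t := csInf_le bdd₂ (mem₂ t ht)
    have e3 : (f (x, x) - f (x - t, x)) / t ≤ A := le_csSup bdd₁ (mem₁ t ht)
    have e4 : (f (x - t, x) - f (x - t, x - t)) / t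
        ≤ (f (x - t, x + h₂) - f (x - t, x)) / h₂ := by
      have := slope_mono (fun y => f (x - t, y)) (hsep₂ (x - t))
        (show x - t < x by linarith) (show x < x + h₂ by linarith)
      simpa [sub_sub_cancel, add_sub_cancel_left] using this
    have decomp : (g (x + t) + g (x - t) - 2 * g x) / t
        = (f (x + t, x + t) - f (x, x + t)) / t + (f (x, x + t) - f (x, x)) / t
          - (f (x, x) - f (x - t, x)) / t - (f (x - t, x) - f (x - t, x - t)) / t := by
      rw [hg, hg, hg]
      field_simp
      ring
    rw [decomp]
    linarith
  -- conclude
  set L := liminf (fun t : ℝ =>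
      (((g (x + t) + g (x - t) - 2 * g x) / t : ℝ) : EReal))
    (nhdsWithin (0:ℝ) (Set.Ioi 0)) with hL
  have key' : ∀ ε : ℝ, 0 < ε → ((-(2*ε) : ℝ) : EReal) ≤ L := by
    intro ε hε
    refine le_liminf_of_le (by isBoundedDefault) ?_
    filter_upwards [key ε hε] with t h
    exact_mod_cast h
  by_contra hcon
  push_neg at hcon
  obtain ⟨r, hr1, hr2⟩ := EReal.lt_iff_exists_real_btwn.mp hcon
  have hrneg : r < 0 := by exact_mod_cast hr2
  have := key' (-r/2) (by linarith)
  rw [show -(2 * (-r/2)) = r by ring] at this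
  exact absurd (lt_of_le_of_lt this hr1) (lt_irrefl _)
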